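/- arXiv:1809.08051 — 2 statements merged into one kernel-verified Lean document; each statement's English description precedes it below -/
import Mathlib

section
/- Let R be a non-integer real number with 0 < R < 1, let q > 0 and x > 0 be real. Then the coupled-limit Grünwald–Letnikov expression lim_{N→∞} (q x/N)^{-R} ∑_{k=0}^{N} (-1)^k C(R,k) (x - k·q x/N) equals the Riemann–Liouville derivative x^{1-R}/Γ(2-R) if and only if q satisfies the characteristic equation q^{R} - Rq + (R - 1) = 0. -/
open Finset Filter Real

/-- Generalized binomial coefficient C(R,k) = R(R-1)⋯(R-k+1)/k! for real R and natural k. -/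
noncomputable def genBinom (R : ℝ) (k : ℕ) : ℝ :=
  (∏ i ∈ Finset.range k, (R - i)) / (Nat.factorial k)

lemma prod_shift (R : ℝ) (k : ℕ) :
    ∏ i ∈ Finset.range (k+1), (R - i) = R * ∏ i ∈ Finset.range k, (R - 1 - i) := by
  rw [Finset.prod_range_succ']
  rw [mul_comm]
  congr 1
  · simp
  · apply Finset.prod_congr rfl
    intro i _
    push_cast
    ring

lemma genBinom_succ (R : ℝ) (k : ℕ) :
    genBinom R (k+1) = R * (∏ i ∈ Finset.range k, (R - 1 - i)) / (Nat.factorial (k+1)) := by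
  rw [genBinom, prod_shift]

lemma pascal (R : ℝ) (k : ℕ) :
    genBinom R (k+1) = genBinom (R-1) (k+1) + genBinom (R-1) k := by
  have hf : (Nat.factorial k : ℝ) ≠ 0 := Nat.cast_ne_zero.2 (Nat.factorial_ne_zero k)
  rw [genBinom_succ, genBinom, genBinom, Finset.prod_range_succ, Nat.factorial_succ]
  push_cast
  field_simp
  ring

lemma sum_alt (R : ℝ) (N : ℕ) :
    ∑ k ∈ Finset.range (N+1), (-1:ℝ)^k * genBinom R k = (-1)^N * genBinom (R-1) N := by
  induction N with
  | zero => simp [genBinom]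
  | succ n ih =>
    rw [Finset.sum_range_succ, ih, pascal]
    ring

lemma genBinom_weight (R : ℝ) (k : ℕ) :
    ((k:ℝ)+1) * genBinom R (k+1) = R * genBinom (R-1) k := by
  have hf : (Nat.factorial k : ℝ) ≠ 0 := Nat.cast_ne_zero.2 (Nat.factorial_ne_zero k)
  rw [genBinom_succ, genBinom, Nat.factorial_succ]
  push_cast
  field_simp

lemma sum_weighted (R : ℝ) (N : ℕ) :
    ∑ k ∈ Finset.range (N+1+1), (-1:ℝ)^k * ((k:ℝ) * genBinom R k) =
      R * ((-1)^(N+1) * genBinom (R-2) N) := by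
  rw [Finset.sum_range_succ']
  have h : ∀ i ∈ Finset.range (N+1),
      (-1:ℝ)^(i+1) * (((i+1 : ℕ):ℝ) * genBinom R (i+1))
        = -(R * ((-1:ℝ)^i * genBinom (R-1) i)) := by
    intro i _
    push_cast
    rw [show ((i:ℝ)+1) * genBinom R (i+1) = R * genBinom (R-1) i from genBinom_weight R i]
    ring
  rw [Finset.sum_congr rfl h, Finset.sum_neg_distrib, ← Finset.mul_sum, sum_alt,
    show R - 1 - 1 = R - 2 by ring]
  simp [genBinom]
  ring

lemma genBinom_down (R : ℝ) (N : ℕ) (hR1 : R ≠ 1) :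
    genBinom (R-2) N = ((N:ℝ)+1) * genBinom (R-1) (N+1) / (R-1) := by
  have hf : (Nat.factorial N : ℝ) ≠ 0 := Nat.cast_ne_zero.2 (Nat.factorial_ne_zero N)
  have h1 : R - 1 ≠ 0 := sub_ne_zero.2 hR1
  rw [genBinom_succ, genBinom, Nat.factorial_succ]
  have hp : ∏ i ∈ Finset.range N, (R - 1 - 1 - (i:ℝ)) = ∏ i ∈ Finset.range N, (R - 2 - (i:ℝ)) :=
    Finset.prod_congr rfl fun i _ => by ring
  rw [hp]
  push_cast
  field_simp

lemma master (R q x : ℝ) (hR1 : R ≠ 1) (N : ℕ) :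
    ∑ k ∈ Finset.range (N+1+1), (-1:ℝ)^k * genBinom R k * (x - k * (q*x/(N+1))) =
      x * (1 - q*R/(R-1)) * ((-1)^(N+1) * genBinom (R-1) (N+1)) := by
  have h1 : R - 1 ≠ 0 := sub_ne_zero.2 hR1
  have hN1 : ((N:ℝ)+1) ≠ 0 := by positivity
  have h : ∀ k ∈ Finset.range (N+1+1), (-1:ℝ)^k * genBinom R k * (x - k*(q*x/(N+1))) =
      x * ((-1:ℝ)^k * genBinom R k) - (q*x/((N:ℝ)+1)) * ((-1:ℝ)^k * ((k:ℝ) * genBinom R k)) := by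
    intro k _
    ring
  rw [Finset.sum_congr rfl h, Finset.sum_sub_distrib, ← Finset.mul_sum, ← Finset.mul_sum,
    sum_alt, sum_weighted, genBinom_down R N hR1]
  field_simp

lemma key_tendsto (R : ℝ) (hR0 : 0 < R) (hR1 : R < 1) :
    Tendsto (fun N : ℕ => (N:ℝ)^R * ((-1:ℝ)^N * genBinom (R-1) N)) atTop
      (nhds (1 / Real.Gamma (1-R))) := by
  set s : ℝ := 1 - R with hs_def
  have hs : 0 < s := by simp [hs_def]; linarith
  have hG : 0 < Real.Gamma s := Real.Gamma_pos_of_pos hs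
  have hid : ∀ N : ℕ, 1 ≤ N → (N:ℝ)^R * ((-1:ℝ)^N * genBinom (R-1) N)
      = (N:ℝ) / ((s + N) * Real.GammaSeq s N) := by
    intro N hN
    have hNpos : (0:ℝ) < N := by exact_mod_cast hN
    have hprod : (-1:ℝ)^N * (∏ i ∈ Finset.range N, (R - 1 - (i:ℝ)))
        = ∏ i ∈ Finset.range N, (s + (i:ℝ)) := by
      rw [show ((-1:ℝ))^N = ∏ _i ∈ Finset.range N, (-1:ℝ) by
            rw [Finset.prod_const, Finset.card_range], ← Finset.prod_mul_distrib]
      exact Finset.prod_congr rfl fun i _ => by simp [hs_def]; ring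
    have hP : 0 < ∏ i ∈ Finset.range N, (s + (i:ℝ)) :=
      Finset.prod_pos fun i _ => by positivity
    have hsN : (0:ℝ) < s + N := by positivity
    have hf : (0:ℝ) < (Nat.factorial N : ℝ) := by exact_mod_cast Nat.factorial_pos N
    have hns : (0:ℝ) < (N:ℝ)^s := Real.rpow_pos_of_pos hNpos s
    have hpow : (N:ℝ)^R * (N:ℝ)^s = (N:ℝ) := by
      rw [← Real.rpow_add hNpos, show R + s = 1 by simp [hs_def], Real.rpow_one]
    rw [genBinom, mul_div_assoc' ((-1:ℝ)^N), hprod, Real.GammaSeq, Finset.prod_range_succ]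
    field_simp
    linear_combination ((∏ i ∈ Finset.range N, (s + (i:ℝ))) * (s + (N:ℝ)) * (Nat.factorial N : ℝ) + 1 + (∏ i ∈ Finset.range N, (s + (i:ℝ))) * (Nat.factorial N : ℝ) * (R - N - 1)) * hpow
  have h1 : Tendsto (fun N : ℕ => (N:ℝ)/(s+N)) atTop (nhds 1) := by
    have := tendsto_natCast_div_add_atTop (𝕜 := ℝ) s
    exact this.congr fun n => by rw [add_comm]
  have h2 : Tendsto (fun N : ℕ => (Real.GammaSeq s N)⁻¹) atTop (nhds (Real.Gamma s)⁻¹) :=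
    (Real.GammaSeq_tendsto_Gamma s).inv₀ (ne_of_gt hG)
  have h3 := h1.mul h2
  rw [one_mul] at h3
  have h4 : Tendsto (fun N : ℕ => (N:ℝ) / ((s + N) * Real.GammaSeq s N)) atTop
      (nhds (Real.Gamma s)⁻¹) := h3.congr fun n => by rw [← div_eq_mul_inv, div_div]
  rw [show (1:ℝ) / Real.Gamma (1-R) = (Real.Gamma s)⁻¹ by rw [one_div]]
  apply h4.congr'
  filter_upwards [eventually_ge_atTop 1] with N hN
  exact (hid N hN).symm

/-- For non-integer 0 < R < 1 and q, x > 0, the coupled-limit Grünwald–Letnikov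
    expression for f(x) = x equals the Riemann–Liouville derivative x^{1-R}/Γ(2-R)
    if and only if q^R - Rq + (R-1) = 0. -/
theorem coupled_GL_linear_eq_RL_iff (R : ℝ) (hR : ∀ n : ℤ, R ≠ (n : ℝ))
    (hR0 : 0 < R) (hR1 : R < 1) (q x : ℝ) (hq : 0 < q) (hx : 0 < x) :
    Filter.Tendsto
      (fun N : ℕ =>
        (q * x / N) ^ (-R) *
          ∑ k ∈ Finset.range (N + 1),
            (-1 : ℝ) ^ k * genBinom R k * (x - k * (q * x / N)))
      Filter.atTop (nhds (x ^ (1 - R) / Real.Gamma (2 - R)))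
      ↔ q ^ R - R * q + (R - 1) = 0 := by
  have h1R : (0:ℝ) < 1 - R := by linarith
  have hRne1 : R ≠ 1 := by linarith
  have hR1ne : R - 1 ≠ 0 := sub_ne_zero.2 hRne1
  have hG1 : 0 < Real.Gamma (1-R) := Real.Gamma_pos_of_pos h1R
  have hG2 : 0 < Real.Gamma (2-R) := Real.Gamma_pos_of_pos (by linarith)
  have hG2eq : Real.Gamma (2-R) = (1-R) * Real.Gamma (1-R) := by
    rw [show (2:ℝ)-R = (1-R)+1 by ring, Real.Gamma_add_one (ne_of_gt h1R)]
  have hqR : (0:ℝ) < q^R := Real.rpow_pos_of_pos hq R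
  have hxpow : (0:ℝ) < x^(1-R) := Real.rpow_pos_of_pos hx _
  set c : ℝ := x^(1-R)/Real.Gamma (2-R) with hc
  set t : ℝ := q^(-R) * (1 - R + R*q) with ht
  have hcne : c ≠ 0 := ne_of_gt (div_pos hxpow hG2)
  have hT : Tendsto
      (fun N : ℕ =>
        (q * x / N) ^ (-R) *
          ∑ k ∈ Finset.range (N + 1),
            (-1 : ℝ) ^ k * genBinom R k * (x - k * (q * x / N)))
      atTop (nhds (c*t)) := by
    have base := (key_tendsto R hR0 hR1).const_mul ((q*x)^(-R) * (x * (1 - q*R/(R-1))))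
    have hxx : x^(1-R) = x * x^(-R) := by
      rw [show (1:ℝ)-R = 1 + (-R) by ring, Real.rpow_add hx, Real.rpow_one]
    have hlim : (q*x)^(-R) * (x * (1 - q*R/(R-1))) * (1/Real.Gamma (1-R)) = c * t := by
      rw [hc, ht, hG2eq, hxx, Real.mul_rpow hq.le hx.le]
      field_simp
      ring
    rw [hlim] at base
    apply base.congr'
    filter_upwards [eventually_ge_atTop 1] with N hN
    obtain ⟨M, rfl⟩ : ∃ M, N = M + 1 := ⟨N-1, (Nat.succ_pred_eq_of_pos hN).symm⟩
    push_cast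
    rw [master R q x hRne1 M]
    have hM : (0:ℝ) < (M:ℝ)+1 := by positivity
    rw [Real.div_rpow (by positivity) hM.le, Real.rpow_neg hM.le]
    field_simp
  constructor
  · intro h
    have he : c * t = c := tendsto_nhds_unique hT h
    have ht1 : t = 1 := by
      rcases mul_right_eq_self₀.mp he with h' | h'
      · exact h'
      · exact absurd h' hcne
    rw [ht, Real.rpow_neg hq.le] at ht1
    have h2 : 1 - R + R*q = q^R := by
      field_simp at ht1
      linarith
    linarith
  · intro h
    have ht1 : t = 1 := by
      rw [ht, Real.rpow_neg hq.le, show 1 - R + R*q = q^R by linarith]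
      field_simp
    rw [ht1, mul_one] at hT
    exact hT
end

section
/- Let R be a non-integer real number with R > 0, let m be a natural number, and let q > 0 and x > 0 be real. Then the coupled-limit Grünwald–Letnikov expression lim_{N→∞} (q x/N)^{-R} ∑_{k=0}^{N} (-1)^k C(R,k) (x - k·q x/N)^m equals the Riemann–Liouville derivative Γ(m+1)/Γ(m-R+1) · x^{m-R} if and only if q satisfies the characteristic equation q^{-R} ∑_{j=0}^{m} C(m,j) (-q)^j/(R-j) = (π/sin(πR)) · Γ(m+1)/(Γ(R+1) Γ(m-R+1)). -/
open Finset Filter Real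

noncomputable def dfall (k i : ℕ) : ℝ := ∏ l ∈ Finset.range i, ((k : ℝ) - l)

noncomputable def Rfall (R : ℝ) (i : ℕ) : ℝ := ∏ l ∈ Finset.range i, (R - l)

noncomputable def St : ℕ → ℕ → ℝ
  | 0, 0 => 1
  | 0, _ + 1 => 0
  | _ + 1, 0 => 0
  | j + 1, i + 1 => St j i + (i + 1) * St j (i + 1)

lemma St_eq_zero : ∀ j i, j < i → St j i = 0
  | 0, i + 1, _ => rfl
  | j + 1, i + 1, h => by
    have h1 : j < i := by omega
    simp [St, St_eq_zero j i h1, St_eq_zero j (i+1) (by omega)]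

lemma St_diag : ∀ j, St j j = 1
  | 0 => rfl
  | j + 1 => by simp [St, St_diag j, St_eq_zero j (j+1) (by omega)]

lemma dfall_succ (k i : ℕ) : dfall k (i + 1) = dfall k i * ((k : ℝ) - i) := by
  simp [dfall, Finset.prod_range_succ]

lemma pow_eq_sum_St (k : ℕ) : ∀ j, (k : ℝ) ^ j = ∑ i ∈ Finset.range (j + 1), St j i * dfall k i
  | 0 => by simp [St, dfall]
  | j + 1 => by
    have IH := pow_eq_sum_St k j
    have hk : (k : ℝ) ^ (j + 1) = ∑ i ∈ Finset.range (j + 1), St j i * (dfall k (i+1) + i * dfall k i) := by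
      rw [pow_succ, IH, Finset.sum_mul]
      refine Finset.sum_congr rfl fun i _ => ?_
      rw [dfall_succ]; ring
    rw [hk]
    rw [show (∑ i ∈ Finset.range (j + 1), St j i * (dfall k (i+1) + i * dfall k i))
        = (∑ i ∈ Finset.range (j + 1), St j i * dfall k (i+1))
          + ∑ i ∈ Finset.range (j + 1), (i : ℝ) * St j i * dfall k i by
      rw [← Finset.sum_add_distrib]; exact Finset.sum_congr rfl fun i _ => by ring]
    -- reindex first sum
    rw [Finset.sum_range_succ' (fun i => St (j+1) i * dfall k i) (j+1)]
    have h0 : St (j+1) 0 * dfall k 0 = 0 := by simp [St]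
    rw [h0, add_zero]
    have h1 : ∀ i ∈ Finset.range (j + 1), St (j+1) (i+1) * dfall k (i+1)
        = St j i * dfall k (i+1) + ((i:ℝ)+1) * St j (i+1) * dfall k (i+1) := by
      intro i _
      show (St j i + ((i:ℝ)+1) * St j (i+1)) * dfall k (i+1) = _
      ring
    rw [Finset.sum_congr rfl h1, Finset.sum_add_distrib]
    congr 1
    have h2 : ∑ i ∈ Finset.range (j + 1), ((i:ℝ)+1) * St j (i+1) * dfall k (i+1)
        = ∑ i ∈ Finset.range (j + 2), (i:ℝ) * St j i * dfall k i := by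
      rw [Finset.sum_range_succ' (fun i => (i:ℝ) * St j i * dfall k i) (j+1)]
      push_cast
      simp
    rw [h2, Finset.sum_range_succ (fun i => (i:ℝ) * St j i * dfall k i) (j+1),
      St_eq_zero j (j+1) (by omega)]
    simp

lemma genBinom_pascal (S : ℝ) (k : ℕ) :
    genBinom S (k + 1) = genBinom (S - 1) (k + 1) + genBinom (S - 1) k := by
  unfold genBinom
  have h1 : (∏ i ∈ Finset.range (k + 1), (S - i)) = S * ∏ i ∈ Finset.range k, (S - 1 - i) := by
    rw [Finset.prod_range_succ' (fun i => S - (i:ℝ)) k]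
    rw [Nat.cast_zero, sub_zero, mul_comm]
    congr 1
    exact Finset.prod_congr rfl fun i _ => by push_cast; ring
  have h2 : (∏ i ∈ Finset.range (k + 1), (S - 1 - i))
      = (∏ i ∈ Finset.range k, (S - 1 - i)) * (S - 1 - k) := Finset.prod_range_succ _ k
  rw [h1, h2, Nat.factorial_succ]
  have hk : ((k.factorial : ℝ)) ≠ 0 := Nat.cast_ne_zero.2 (Nat.factorial_ne_zero k)
  have hk1 : ((k:ℝ) + 1) ≠ 0 := by positivity
  field_simp
  push_cast
  ring

lemma alt_sum_genBinom (S : ℝ) (N : ℕ) :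
    ∑ k ∈ Finset.range (N + 1), (-1 : ℝ) ^ k * genBinom S k
      = (-1) ^ N * genBinom (S - 1) N := by
  induction N with
  | zero => simp [genBinom]
  | succ N ih =>
    rw [Finset.sum_range_succ, ih, genBinom_pascal]
    ring

lemma genBinom_mul_dfall (R : ℝ) (i k : ℕ) (h : i ≤ k) :
    genBinom R k * dfall k i = Rfall R i * genBinom (R - i) (k - i) := by
  unfold genBinom dfall Rfall
  have hsplit : (∏ l ∈ Finset.range k, (R - l))
      = (∏ l ∈ Finset.range i, (R - l)) * ∏ l ∈ Finset.range (k - i), (R - i - l) := by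
    have := Finset.prod_range_add (fun l => R - l) i (k - i)
    rw [Nat.add_sub_cancel' h] at this
    rw [this]
    congr 1
    exact Finset.prod_congr rfl fun l _ => by push_cast; ring
  have hdf : (∏ l ∈ Finset.range i, ((k : ℝ) - l)) = (k.descFactorial i : ℝ) := by
    rw [Nat.descFactorial_eq_prod_range, Nat.cast_prod]
    refine Finset.prod_congr rfl fun l hl => ?_
    rw [Nat.cast_sub (le_of_lt (lt_of_lt_of_le (Finset.mem_range.1 hl) h))]
  have hfac : ((k - i).factorial : ℝ) * (k.descFactorial i : ℝ) = (k.factorial : ℝ) := by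
    rw [← Nat.cast_mul, Nat.factorial_mul_descFactorial h]
  have h1 : ((k.factorial : ℝ)) ≠ 0 := Nat.cast_ne_zero.2 (Nat.factorial_ne_zero k)
  have h2 : (((k - i).factorial : ℝ)) ≠ 0 := Nat.cast_ne_zero.2 (Nat.factorial_ne_zero _)
  rw [hsplit, hdf]
  field_simp
  rw [mul_assoc, mul_comm ((k.descFactorial i : ℝ)) _, hfac]

lemma dfall_eq_zero (k i : ℕ) (h : k < i) : dfall k i = 0 := by
  refine Finset.prod_eq_zero (Finset.mem_range.2 h) ?_
  simp

lemma sum_alt_dfall (R : ℝ) (i N : ℕ) (h : i ≤ N) :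
    ∑ k ∈ Finset.range (N + 1), (-1 : ℝ) ^ k * genBinom R k * dfall k i
      = Rfall R i * ((-1) ^ N * genBinom (R - i - 1) (N - i)) := by
  have hsplit := Finset.sum_range_add
    (fun k => (-1 : ℝ) ^ k * genBinom R k * dfall k i) i (N + 1 - i)
  rw [Nat.add_sub_cancel' (le_trans h (Nat.le_succ N))] at hsplit
  rw [hsplit]
  have hz : ∑ k ∈ Finset.range i, (-1 : ℝ) ^ k * genBinom R k * dfall k i = 0 := by
    refine Finset.sum_eq_zero fun k hk => ?_
    rw [dfall_eq_zero k i (Finset.mem_range.1 hk), mul_zero]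
  rw [hz, zero_add]
  have hN : N + 1 - i = (N - i) + 1 := by omega
  have hterm : ∀ l ∈ Finset.range (N + 1 - i),
      (-1 : ℝ) ^ (i + l) * genBinom R (i + l) * dfall (i + l) i
        = (-1 : ℝ) ^ i * Rfall R i * ((-1 : ℝ) ^ l * genBinom (R - i) l) := by
    intro l _
    rw [mul_assoc, genBinom_mul_dfall R i (i + l) (Nat.le_add_right i l),
      Nat.add_sub_cancel_left, pow_add]
    ring
  rw [Finset.sum_congr rfl hterm, ← Finset.mul_sum, hN, alt_sum_genBinom (R - i) (N - i)]
  have hsgn : (-1 : ℝ) ^ i * (-1 : ℝ) ^ (N - i) = (-1 : ℝ) ^ N := by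
    rw [← pow_add, Nat.add_sub_cancel' h]
  have : R - i - 1 = R - (i:ℝ) - 1 := rfl
  rw [show R - (i:ℝ) - 1 = R - (i:ℝ) - 1 from rfl]
  calc (-1:ℝ)^i * Rfall R i * ((-1)^(N-i) * genBinom (R - i - 1) (N-i))
      = Rfall R i * (((-1:ℝ)^i * (-1)^(N-i)) * genBinom (R - i - 1) (N-i)) := by ring
    _ = Rfall R i * ((-1)^N * genBinom (R - i - 1) (N - i)) := by rw [hsgn]

lemma nonint_sub_ne (S : ℝ) (hS : ∀ n : ℤ, S ≠ (n : ℝ)) (c : ℤ) : ∀ n : ℤ, S - c ≠ (n : ℝ) := by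
  intro n h
  exact hS (n + c) (by push_cast; linarith)

lemma gamma_neg_ne_zero (S : ℝ) (hS : ∀ n : ℤ, S ≠ (n : ℝ)) : Real.Gamma (-S) ≠ 0 := by
  refine Real.Gamma_ne_zero fun n => ?_
  intro h
  exact hS n (by push_cast at h ⊢; linarith)

lemma tendsto_genBinom_gamma (S : ℝ) (hS : ∀ n : ℤ, S ≠ (n : ℝ)) :
    Tendsto (fun n : ℕ => ((n : ℝ) - S) * (n : ℝ) ^ S * ((-1 : ℝ) ^ n * genBinom S n))
      atTop (nhds (Real.Gamma (-S))⁻¹) := by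
  have hG := (Real.GammaSeq_tendsto_Gamma (-S)).inv₀ (gamma_neg_ne_zero S hS)
  refine hG.congr' ?_
  filter_upwards [eventually_ge_atTop 1] with n hn
  have hnpos : (0 : ℝ) < n := by exact_mod_cast hn
  have hD : (∏ j ∈ Finset.range (n + 1), (-S + j))
      = (-1 : ℝ) ^ (n + 1) * ((S - n) * (genBinom S n * (n.factorial : ℝ))) := by
    have h1 : (∏ j ∈ Finset.range (n + 1), (-S + j))
        = (-1 : ℝ) ^ (n + 1) * ∏ j ∈ Finset.range (n + 1), (S - j) := by
      have hm1 : (-1 : ℝ) ^ (n + 1) = ∏ _j ∈ Finset.range (n + 1), (-1 : ℝ) := by simp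
      rw [hm1, ← Finset.prod_mul_distrib]
      exact Finset.prod_congr rfl fun j _ => by ring
    rw [h1, Finset.prod_range_succ]
    have : genBinom S n * (n.factorial : ℝ) = ∏ j ∈ Finset.range n, (S - j) := by
      unfold genBinom
      field_simp
    rw [this]
    ring
  have hfac : ((n.factorial : ℝ)) ≠ 0 := Nat.cast_ne_zero.2 (Nat.factorial_ne_zero n)
  have hrp : (n : ℝ) ^ (-S) ≠ 0 := (Real.rpow_pos_of_pos hnpos _).ne'
  rw [Real.GammaSeq]
  rw [inv_div, hD]
  rw [Real.rpow_neg (le_of_lt hnpos)]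
  field_simp
  ring

lemma tendsto_div_add_const (c : ℝ) :
    Tendsto (fun N : ℕ => (N : ℝ) / ((N : ℝ) + c)) atTop (nhds 1) := by
  have h1 : Tendsto (fun N : ℕ => (N : ℝ) + c) atTop atTop :=
    tendsto_atTop_add_const_right atTop c tendsto_natCast_atTop_atTop
  have h0 : Tendsto (fun N : ℕ => c / ((N : ℝ) + c)) atTop (nhds 0) := by
    have := tendsto_inv_atTop_zero.comp h1
    have h2 := this.const_mul c
    rw [mul_zero] at h2
    exact h2.congr fun N => by rw [Function.comp_apply, div_eq_mul_inv]
  have h3 := (tendsto_const_nhds : Tendsto (fun _ : ℕ => (1:ℝ)) atTop (nhds 1)).sub h0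
  rw [sub_zero] at h3
  refine h3.congr' ?_
  filter_upwards [h1.eventually_gt_atTop 0] with N hN
  field_simp
  ring

lemma tendsto_ratio_rpow (i : ℕ) (e : ℝ) :
    Tendsto (fun N : ℕ => (((N : ℝ) - i) / (N : ℝ)) ^ e) atTop (nhds 1) := by
  have h0 : Tendsto (fun N : ℕ => ((N : ℝ) - i) / (N : ℝ)) atTop (nhds 1) := by
    have hi : Tendsto (fun N : ℕ => (i : ℝ) / (N : ℝ)) atTop (nhds 0) :=
      tendsto_const_div_atTop_nhds_zero_nat (i : ℝ)
    have h3 := (tendsto_const_nhds : Tendsto (fun _ : ℕ => (1:ℝ)) atTop (nhds 1)).sub hi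
    rw [sub_zero] at h3
    refine h3.congr' ?_
    filter_upwards [eventually_gt_atTop 0] with N hN
    have : (0:ℝ) < N := by exact_mod_cast hN
    field_simp
  have h4 := h0.rpow_const (p := e) (Or.inl one_ne_zero)
  rwa [Real.one_rpow] at h4

lemma tendsto_rpow_int_diff (i j : ℕ) (hij : i ≤ j) :
    Tendsto (fun N : ℕ => (N : ℝ) ^ ((i : ℝ) - j)) atTop
      (nhds (if i = j then 1 else 0)) := by
  by_cases h : i = j
  · subst h
    simp only [sub_self, Real.rpow_zero, if_true]
    exact tendsto_const_nhds
  · simp only [h, if_false]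
    have hpos : (0 : ℝ) < (j : ℝ) - i := by
      have : i < j := lt_of_le_of_ne hij h
      have : (i:ℝ) < j := by exact_mod_cast this
      linarith
    have := (tendsto_rpow_neg_atTop hpos).comp tendsto_natCast_atTop_atTop
    refine this.congr fun N => ?_
    rw [Function.comp_apply, neg_sub]

lemma nonint_ne (R : ℝ) (hR : ∀ n : ℤ, R ≠ (n : ℝ)) (a : ℝ) (n : ℤ) (h : a = R - n) : a ≠ 0 := by
  intro h0
  exact hR n (by rw [h] at h0; linarith)

lemma term_tendsto (R : ℝ) (hR : ∀ n : ℤ, R ≠ (n : ℝ)) (i j : ℕ) (hij : i ≤ j) :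
    Tendsto (fun N : ℕ =>
        (N : ℝ) ^ (R - j) * ((-1 : ℝ) ^ (N - i) * genBinom (R - i - 1) (N - i)))
      atTop (nhds (if i = j then (Real.Gamma ((i : ℝ) + 1 - R))⁻¹ else 0)) := by
  set S : ℝ := R - i - 1 with hSdef
  have hS : ∀ n : ℤ, S ≠ (n : ℝ) := by
    intro n h
    exact hR (n + i + 1) (by push_cast; rw [hSdef] at h; linarith)
  have hg := (tendsto_genBinom_gamma S hS).comp (tendsto_sub_atTop_nat i)
  have hb := ((tendsto_ratio_rpow i ((i : ℝ) + 1 - R)).mul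
      (tendsto_rpow_int_diff i j hij)).mul (tendsto_div_add_const (1 - R))
  have hprod := hg.mul hb
  have hlim : (Real.Gamma (-S))⁻¹ * (1 * (if i = j then (1:ℝ) else 0) * 1)
      = (if i = j then (Real.Gamma ((i : ℝ) + 1 - R))⁻¹ else 0) := by
    have hgam : -S = (i : ℝ) + 1 - R := by rw [hSdef]; ring
    rw [hgam]
    by_cases h : i = j <;> simp [h]
  rw [hlim] at hprod
  refine hprod.congr' ?_
  filter_upwards [eventually_ge_atTop (i + 1)] with N hN
  have hiN : i ≤ N := by omega
  have hcast : ((N - i : ℕ) : ℝ) = (N : ℝ) - i := by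
    rw [Nat.cast_sub hiN]
  have hnpos : (0 : ℝ) < (N : ℝ) := by
    have : 0 < N := by omega
    exact_mod_cast this
  have hapos : (0 : ℝ) < (N : ℝ) - i := by
    have : (i : ℝ) < N := by exact_mod_cast (by omega : i < N)
    linarith
  have hd : (N : ℝ) + (1 - R) ≠ 0 := by
    intro h0
    exact hR (N + 1) (by push_cast; linarith)
  simp only [Function.comp_apply]
  rw [hcast]
  -- goal: ((N-i) - S) * (N-i)^S * ((-1)^(N-i) * genBinom S (N-i)) * bracket = N^(R-j) * (...)
  set n : ℝ := (N : ℝ)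
  set a : ℝ := n - i with hadef
  have e1 : (a / n) ^ ((i : ℝ) + 1 - R) = a ^ ((i : ℝ) + 1 - R) * (n ^ ((i : ℝ) + 1 - R))⁻¹ := by
    rw [div_eq_mul_inv, Real.mul_rpow (le_of_lt hapos) (by positivity),
      Real.inv_rpow (le_of_lt hnpos)]
  have e2 : a ^ S * a ^ ((i : ℝ) + 1 - R) = 1 := by
    rw [← Real.rpow_add hapos]
    rw [show S + ((i : ℝ) + 1 - R) = 0 by rw [hSdef]; ring, Real.rpow_zero]
  have e3 : (n ^ ((i : ℝ) + 1 - R))⁻¹ * n ^ ((i : ℝ) - j) * n = n ^ (R - (j : ℝ)) := by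
    calc (n ^ ((i : ℝ) + 1 - R))⁻¹ * n ^ ((i : ℝ) - j) * n
        = n ^ (-((i : ℝ) + 1 - R)) * n ^ ((i : ℝ) - j) * n ^ (1 : ℝ) := by
          rw [Real.rpow_neg (le_of_lt hnpos), Real.rpow_one]
      _ = n ^ (-((i : ℝ) + 1 - R) + ((i : ℝ) - j) + 1) := by
          rw [← Real.rpow_add hnpos, ← Real.rpow_add hnpos]
      _ = n ^ (R - (j : ℝ)) := by congr 1; ring
  have key : (a - S) * a ^ S *
      ((a / n) ^ ((i : ℝ) + 1 - R) * n ^ ((i : ℝ) - (j : ℝ)) * (n / (n + (1 - R))))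
        = n ^ (R - (j : ℝ)) := by
    rw [e1]
    have haS : a - S = n + (1 - R) := by rw [hSdef, hadef]; ring
    rw [haS]
    calc (n + (1 - R)) * a ^ S *
        ((a ^ ((i : ℝ) + 1 - R) * (n ^ ((i : ℝ) + 1 - R))⁻¹) * n ^ ((i : ℝ) - (j : ℝ))
          * (n / (n + (1 - R))))
        = (a ^ S * a ^ ((i : ℝ) + 1 - R)) * ((n ^ ((i : ℝ) + 1 - R))⁻¹ * n ^ ((i : ℝ) - j) * n)
            * ((n + (1 - R)) / (n + (1 - R))) := by ring
      _ = 1 * n ^ (R - (j : ℝ)) * 1 := by rw [e2, e3, div_self hd]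
      _ = n ^ (R - (j : ℝ)) := by ring
  rw [← key]
  ring

lemma main_limit (R : ℝ) (hR : ∀ n : ℤ, R ≠ (n : ℝ)) (m : ℕ) (q x : ℝ)
    (hq : 0 < q) (hx : 0 < x) :
    Filter.Tendsto
      (fun N : ℕ =>
        (q * x / N) ^ (-R) *
          ∑ k ∈ Finset.range (N + 1),
            (-1 : ℝ) ^ k * genBinom R k * (x - k * (q * x / N)) ^ m)
      Filter.atTop
      (nhds (∑ j ∈ Finset.range (m + 1),
        (m.choose j : ℝ) * x ^ (m - j) * (q * x) ^ ((j : ℝ) - R) * Rfall R j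
          / Real.Gamma ((j : ℝ) + 1 - R))) := by
  set c : ℕ → ℕ → ℝ := fun i j =>
    (m.choose j : ℝ) * x ^ (m - j) * (-1 : ℝ) ^ j * (q * x) ^ ((j : ℝ) - R)
      * St j i * Rfall R i * (-1 : ℝ) ^ i with hc
  have T : Tendsto (fun N : ℕ => ∑ j ∈ Finset.range (m + 1), ∑ i ∈ Finset.range (j + 1),
      c i j * ((N : ℝ) ^ (R - j) * ((-1 : ℝ) ^ (N - i) * genBinom (R - i - 1) (N - i))))
      atTop (nhds (∑ j ∈ Finset.range (m + 1), ∑ i ∈ Finset.range (j + 1),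
        c i j * (if i = j then (Real.Gamma ((i : ℝ) + 1 - R))⁻¹ else 0))) := by
    refine tendsto_finset_sum _ fun j _ => tendsto_finset_sum _ fun i hi => ?_
    exact (term_tendsto R hR i j (Nat.lt_succ_iff.1 (Finset.mem_range.1 hi))).const_mul _
  have hval : (∑ j ∈ Finset.range (m + 1), ∑ i ∈ Finset.range (j + 1),
      c i j * (if i = j then (Real.Gamma ((i : ℝ) + 1 - R))⁻¹ else 0))
      = ∑ j ∈ Finset.range (m + 1),
        (m.choose j : ℝ) * x ^ (m - j) * (q * x) ^ ((j : ℝ) - R) * Rfall R j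
          / Real.Gamma ((j : ℝ) + 1 - R) := by
    refine Finset.sum_congr rfl fun j _ => ?_
    have h1 : ∀ i ∈ Finset.range (j + 1),
        c i j * (if i = j then (Real.Gamma ((i : ℝ) + 1 - R))⁻¹ else 0)
          = if i = j then c i j * (Real.Gamma ((i : ℝ) + 1 - R))⁻¹ else 0 := by
      intro i _
      by_cases h : i = j <;> simp [h]
    rw [Finset.sum_congr rfl h1,
      Finset.sum_ite_eq' (Finset.range (j + 1)) j
        (fun i => c i j * (Real.Gamma ((i : ℝ) + 1 - R))⁻¹),
      if_pos (Finset.self_mem_range_succ j), hc]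
    simp only [St_diag]
    rw [div_eq_mul_inv]
    ring_nf
    rw [mul_comm j 2, pow_mul, neg_one_sq, one_pow, mul_one]
  rw [hval] at T
  refine T.congr' ?_
  filter_upwards [eventually_ge_atTop (m + 1)] with N hN
  have hNpos : (0 : ℝ) < (N : ℝ) := by
    have : 0 < N := by omega
    exact_mod_cast this
  set h : ℝ := q * x / N with hhdef
  have hh : 0 < h := by positivity
  -- step 1 : binomial expansion and swap
  have step1 : ∑ k ∈ Finset.range (N + 1),
      (-1 : ℝ) ^ k * genBinom R k * (x - k * h) ^ m
      = ∑ j ∈ Finset.range (m + 1), ((m.choose j : ℝ) * x ^ (m - j) * (-1 : ℝ) ^ j * h ^ j)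
          * ∑ k ∈ Finset.range (N + 1), (-1 : ℝ) ^ k * genBinom R k * (k : ℝ) ^ j := by
    have hexp : ∀ k : ℕ, (x - (k : ℝ) * h) ^ m
        = ∑ j ∈ Finset.range (m + 1),
            ((m.choose j : ℝ) * x ^ (m - j) * (-1 : ℝ) ^ j * h ^ j) * (k : ℝ) ^ j := by
      intro k
      rw [sub_eq_add_neg, add_comm, add_pow]
      refine Finset.sum_congr rfl fun j _ => ?_
      rw [neg_pow, mul_pow]
      ring
    rw [Finset.sum_congr rfl fun k _ => by rw [hexp k]]
    rw [Finset.sum_congr rfl fun k (_ : k ∈ Finset.range (N+1)) => Finset.mul_sum _ _ _]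
    rw [Finset.sum_comm]
    refine Finset.sum_congr rfl fun j _ => ?_
    rw [Finset.mul_sum]
    refine Finset.sum_congr rfl fun k _ => by ring
  -- step 2 : inner sums via Stirling decomposition
  have step2 : ∀ j ∈ Finset.range (m + 1),
      ∑ k ∈ Finset.range (N + 1), (-1 : ℝ) ^ k * genBinom R k * (k : ℝ) ^ j
        = ∑ i ∈ Finset.range (j + 1),
            St j i * (Rfall R i * ((-1 : ℝ) ^ i * ((-1 : ℝ) ^ (N - i) * genBinom (R - i - 1) (N - i)))) := by
    intro j hj
    have hjm : j ≤ m := Nat.lt_succ_iff.1 (Finset.mem_range.1 hj)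
    have : ∀ k ∈ Finset.range (N + 1), (-1 : ℝ) ^ k * genBinom R k * (k : ℝ) ^ j
        = ∑ i ∈ Finset.range (j + 1), St j i * ((-1 : ℝ) ^ k * genBinom R k * dfall k i) := by
      intro k _
      rw [pow_eq_sum_St k j, Finset.mul_sum]
      exact Finset.sum_congr rfl fun i _ => by ring
    rw [Finset.sum_congr rfl this, Finset.sum_comm]
    refine Finset.sum_congr rfl fun i hi => ?_
    have hiN : i ≤ N := by
      have := Nat.lt_succ_iff.1 (Finset.mem_range.1 hi); omega
    rw [← Finset.mul_sum, sum_alt_dfall R i N hiN]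
    have hsgn : (-1 : ℝ) ^ N = (-1 : ℝ) ^ i * (-1 : ℝ) ^ (N - i) := by
      rw [← pow_add, Nat.add_sub_cancel' hiN]
    rw [hsgn]
    ring
  -- step 3 : rpow bookkeeping
  have hpow : ∀ j : ℕ, h ^ j * h ^ (-R) = (q * x) ^ ((j : ℝ) - R) * (N : ℝ) ^ (R - (j : ℝ)) := by
    intro j
    rw [← Real.rpow_natCast h j, ← Real.rpow_add hh,
      show (j : ℝ) + -R = (j : ℝ) - R by ring, hhdef,
      Real.div_rpow (by positivity) (le_of_lt hNpos), div_eq_mul_inv,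
      ← Real.rpow_neg (le_of_lt hNpos), neg_sub]
  symm
  calc (h ^ (-R) * ∑ k ∈ Finset.range (N + 1),
        (-1 : ℝ) ^ k * genBinom R k * (x - k * h) ^ m)
      = ∑ j ∈ Finset.range (m + 1), ((m.choose j : ℝ) * x ^ (m - j) * (-1 : ℝ) ^ j
          * (h ^ j * h ^ (-R)))
          * ∑ i ∈ Finset.range (j + 1),
            St j i * (Rfall R i * ((-1 : ℝ) ^ i * ((-1 : ℝ) ^ (N - i) * genBinom (R - i - 1) (N - i)))) := by
        rw [step1, Finset.mul_sum]
        refine Finset.sum_congr rfl fun j hj => ?_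
        rw [step2 j hj]
        ring
    _ = ∑ j ∈ Finset.range (m + 1), ∑ i ∈ Finset.range (j + 1),
          c i j * ((N : ℝ) ^ (R - (j : ℝ)) * ((-1 : ℝ) ^ (N - i) * genBinom (R - i - 1) (N - i))) := by
        refine Finset.sum_congr rfl fun j _ => ?_
        rw [hpow j, Finset.mul_sum]
        refine Finset.sum_congr rfl fun i _ => ?_
        rw [hc]
        ring

lemma Rfall_ne_zero (R : ℝ) (hR : ∀ n : ℤ, R ≠ (n : ℝ)) (j : ℕ) : Rfall R j ≠ 0 := by
  refine Finset.prod_ne_zero_iff.2 fun l _ => ?_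
  intro h
  exact hR l (by push_cast; linarith)

lemma gamma_neg_ne_zero' (R : ℝ) (hR : ∀ n : ℤ, R ≠ (n : ℝ)) : Real.Gamma (-R) ≠ 0 := by
  refine Real.Gamma_ne_zero fun n => ?_
  intro h
  exact hR n (by push_cast at h ⊢; linarith)

lemma Gamma_shift (R : ℝ) (hR : ∀ n : ℤ, R ≠ (n : ℝ)) (j : ℕ) :
    Real.Gamma ((j : ℝ) + 1 - R) = (-1 : ℝ) ^ (j + 1) * Rfall R (j + 1) * Real.Gamma (-R) := by
  induction j with
  | zero =>
    have h0 : -R ≠ 0 := by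
      intro h; exact hR 0 (by push_cast; linarith)
    have := Real.Gamma_add_one h0
    rw [show ((0 : ℕ) : ℝ) + 1 - R = -R + 1 by push_cast; ring, this]
    simp [Rfall]
  | succ j ih =>
    have hne : (j : ℝ) + 1 - R ≠ 0 := by
      intro h; exact hR (j + 1) (by push_cast; linarith)
    have := Real.Gamma_add_one hne
    rw [show ((j + 1 : ℕ) : ℝ) + 1 - R = ((j : ℝ) + 1 - R) + 1 by push_cast; ring, this, ih]
    rw [show Rfall R (j + 1 + 1) = Rfall R (j + 1) * (R - (j + 1)) from by
      simp only [Rfall, Finset.prod_range_succ]; push_cast; ring]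
    ring



/-- For non-integer R > 0, natural m, and q, x > 0, the coupled-limit Grünwald–Letnikov
    expression for f(x) = x^m equals the Riemann–Liouville derivative
    Γ(m+1)/Γ(m-R+1) · x^{m-R} iff q satisfies the characteristic equation
    q^{-R} ∑_{j=0}^{m} C(m,j)(-q)^j/(R-j) = (π/sin(πR)) Γ(m+1)/(Γ(R+1)Γ(m-R+1)). -/
theorem coupled_GL_power_eq_RL_iff (R : ℝ) (hR : ∀ n : ℤ, R ≠ (n : ℝ)) (hR0 : 0 < R)
    (m : ℕ) (q x : ℝ) (hq : 0 < q) (hx : 0 < x) :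
    Filter.Tendsto
      (fun N : ℕ =>
        (q * x / N) ^ (-R) *
          ∑ k ∈ Finset.range (N + 1),
            (-1 : ℝ) ^ k * genBinom R k * (x - k * (q * x / N)) ^ m)
      Filter.atTop
      (nhds (Real.Gamma ((m : ℝ) + 1) / Real.Gamma ((m : ℝ) - R + 1) * x ^ ((m : ℝ) - R)))
      ↔ q ^ (-R) * ∑ j ∈ Finset.range (m + 1), (m.choose j : ℝ) * (-q) ^ j / (R - j)
          = Real.pi / Real.sin (Real.pi * R)
            * (Real.Gamma ((m : ℝ) + 1) / (Real.Gamma (R + 1) * Real.Gamma ((m : ℝ) - R + 1))) := by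
  have hG := gamma_neg_ne_zero' R hR
  have hnG : -Real.Gamma (-R) ≠ 0 := neg_ne_zero.2 hG
  have hL := main_limit R hR m q x hq hx
  have hx0 : x ^ ((m : ℝ) - R) ≠ 0 := (Real.rpow_pos_of_pos hx _).ne'
  -- decompose the limit
  have hterm : ∀ j ∈ Finset.range (m + 1),
      (m.choose j : ℝ) * x ^ (m - j) * (q * x) ^ ((j : ℝ) - R) * Rfall R j
          / Real.Gamma ((j : ℝ) + 1 - R)
        = (x ^ ((m : ℝ) - R) * (-(Real.Gamma (-R)))⁻¹ * q ^ (-R))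
            * ((m.choose j : ℝ) * (-q) ^ j / (R - j)) := by
    intro j hj
    have hjm : j ≤ m := Nat.lt_succ_iff.1 (Finset.mem_range.1 hj)
    have hRj : R - (j : ℝ) ≠ 0 := by
      intro h; exact hR j (by push_cast; linarith)
    have hRf := Rfall_ne_zero R hR j
    rw [Gamma_shift R hR j]
    rw [show Rfall R (j + 1) = Rfall R j * (R - (j : ℝ)) from by
      rw [Rfall, Finset.prod_range_succ]; rfl]
    have hmul : (q * x) ^ ((j : ℝ) - R) = q ^ j * q ^ (-R) * x ^ ((j : ℝ) - R) := by
      rw [Real.mul_rpow (le_of_lt hq) (le_of_lt hx),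
        show (j : ℝ) - R = (j : ℝ) + (-R) by ring,
        Real.rpow_add hq, Real.rpow_natCast]
    have hxp : x ^ (m - j) * x ^ ((j : ℝ) - R) = x ^ ((m : ℝ) - R) := by
      rw [← Real.rpow_natCast x (m - j), Nat.cast_sub hjm, ← Real.rpow_add hx]
      congr 1
      ring
    rw [hmul]
    rw [show (m.choose j : ℝ) * x ^ (m - j) * (q ^ j * q ^ (-R) * x ^ ((j : ℝ) - R)) * Rfall R j
        = (m.choose j : ℝ) * (x ^ (m - j) * x ^ ((j : ℝ) - R)) * (q ^ j * q ^ (-R)) * Rfall R j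
      from by ring, hxp]
    have hD : (-1 : ℝ) ^ (j + 1) * (Rfall R j * (R - (j : ℝ))) * Real.Gamma (-R) ≠ 0 := by
      refine mul_ne_zero (mul_ne_zero ?_ (mul_ne_zero hRf hRj)) hG
      exact pow_ne_zero _ (by norm_num)
    rw [div_eq_iff hD, neg_pow q j]
    rcases Nat.even_or_odd j with he | ho
    · rw [he.neg_one_pow, (he.add_one).neg_one_pow]
      field_simp
    · rw [ho.neg_one_pow, (ho.add_one).neg_one_pow]
      field_simp
  rw [Finset.sum_congr rfl hterm, ← Finset.mul_sum] at hL
  -- reflection formula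
  have hsin : Real.sin (Real.pi * R) ≠ 0 := by
    intro h
    rcases Real.sin_eq_zero_iff.1 h with ⟨n, hn⟩
    rw [mul_comm] at hn
    exact hR n (mul_left_cancel₀ Real.pi_ne_zero hn).symm
  have hGR1 : Real.Gamma (R + 1) ≠ 0 := (Real.Gamma_pos_of_pos (by linarith)).ne'
  have hrefl : Real.Gamma (-R) * Real.Gamma (R + 1) = -(Real.pi / Real.sin (Real.pi * R)) := by
    have h1 := Real.Gamma_mul_Gamma_one_sub (-R)
    rw [show (1 : ℝ) - (-R) = R + 1 by ring] at h1
    rw [h1, show Real.pi * (-R) = -(Real.pi * R) by ring, Real.sin_neg, div_neg]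
  set S : ℝ := ∑ j ∈ Finset.range (m + 1), (m.choose j : ℝ) * (-q) ^ j / (R - j) with hS
  set Gm : ℝ := Real.Gamma ((m : ℝ) + 1) / Real.Gamma ((m : ℝ) - R + 1) with hGm
  have hGm0 : Real.Gamma ((m : ℝ) - R + 1) ≠ 0 := by
    refine Real.Gamma_ne_zero fun n => ?_
    intro h
    exact hR ((m : ℤ) + 1 + n) (by push_cast; linarith)
  have hBB : Real.pi / Real.sin (Real.pi * R)
      * (Real.Gamma ((m : ℝ) + 1) / (Real.Gamma (R + 1) * Real.Gamma ((m : ℝ) - R + 1)))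
      = -Real.Gamma (-R) * Gm := by
    rw [show Real.pi / Real.sin (Real.pi * R) = -(Real.Gamma (-R) * Real.Gamma (R + 1)) from by
      linarith [hrefl], hGm]
    field_simp
  rw [hBB]
  constructor
  · intro hT
    have hEq := tendsto_nhds_unique hL hT
    have h2 : x ^ ((m : ℝ) - R) * ((-(Real.Gamma (-R)))⁻¹ * (q ^ (-R) * S))
        = x ^ ((m : ℝ) - R) * Gm := by
      linear_combination hEq
    have h3 := mul_left_cancel₀ hx0 h2
    have h4 : -Real.Gamma (-R) * ((-(Real.Gamma (-R)))⁻¹ * (q ^ (-R) * S))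
        = -Real.Gamma (-R) * Gm := by rw [h3]
    rwa [mul_inv_cancel_left₀ hnG] at h4
  · intro hC
    have h2 : (x ^ ((m : ℝ) - R) * (-(Real.Gamma (-R)))⁻¹ * q ^ (-R)) * S
        = Gm * x ^ ((m : ℝ) - R) := by
      calc (x ^ ((m : ℝ) - R) * (-(Real.Gamma (-R)))⁻¹ * q ^ (-R)) * S
          = x ^ ((m : ℝ) - R) * ((-(Real.Gamma (-R)))⁻¹ * (q ^ (-R) * S)) := by ring
        _ = x ^ ((m : ℝ) - R) * ((-(Real.Gamma (-R)))⁻¹ * (-Real.Gamma (-R) * Gm)) := by rw [hC]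
        _ = Gm * x ^ ((m : ℝ) - R) := by rw [inv_mul_cancel_left₀ hnG]; ring
    rw [← h2]
    exact hL
end
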